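/- Let x₁,…,x_N be nonnegative reals with sum 1, N ≥ 2. Then the Shannon entropy satisfies ∑ᵢ η(xᵢ) ≤ log(N)·√(2N/(N-1))·√(∑_{i<j} xᵢxⱼ), where η(t) = -t·log t with η(0)=0. -/

import Mathlib

open Real Set

noncomputable def gE (t : ℝ) : ℝ := t * (Real.log t)^2 / (1 - t)

lemma gE_deriv1 {t : ℝ} (ht : t ∈ Set.Ioo (0:ℝ) 1) :
    HasDerivAt gE ((((Real.log t)^2 + 2*Real.log t) * (1-t) + t * (Real.log t)^2) / (1-t)^2) t := by
  obtain ⟨h0, h1⟩ := ht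
  have hne : t ≠ 0 := h0.ne'
  have hne1 : (1:ℝ) - t ≠ 0 := by linarith
  have hu : HasDerivAt (fun s : ℝ => s * (Real.log s)^2) ((Real.log t)^2 + 2*Real.log t) t := by
    have := (hasDerivAt_id t).fun_mul ((Real.hasDerivAt_log hne).fun_pow 2)
    refine this.congr_deriv ?_
    field_simp
    norm_num [id]; ring
  have hv : HasDerivAt (fun s : ℝ => 1 - s) (-1) t := by
    simpa using (hasDerivAt_const t (1:ℝ)).fun_sub (hasDerivAt_id t)
  have := hu.fun_div hv hne1
  refine this.congr_deriv ?_
  field_simp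
  ring

lemma gE_deriv2 {t : ℝ} (ht : t ∈ Set.Ioo (0:ℝ) 1) :
    HasDerivAt (fun s : ℝ => (((Real.log s)^2 + 2*Real.log s) * (1-s) + s * (Real.log s)^2) / (1-s)^2)
      (2*(Real.log t - t + 1)*(t*Real.log t - t + 1)/(t*(1-t)^3)) t := by
  obtain ⟨h0, h1⟩ := ht
  have hne : t ≠ 0 := h0.ne'
  have hne1 : (1:ℝ) - t ≠ 0 := by linarith
  have hlog := Real.hasDerivAt_log hne
  have hu : HasDerivAt (fun s : ℝ => ((Real.log s)^2 + 2*Real.log s) * (1-s) + s * (Real.log s)^2)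
      ((2*Real.log t*t⁻¹ + 2*t⁻¹)*(1-t) + ((Real.log t)^2 + 2*Real.log t)*(-1)
        + ((Real.log t)^2 + 2*Real.log t)) t := by
    have h1' : HasDerivAt (fun s : ℝ => (Real.log s)^2 + 2*Real.log s)
        (2*Real.log t*t⁻¹ + 2*t⁻¹) t := by
      have := (hlog.fun_pow 2).fun_add ((hasDerivAt_const t (2:ℝ)).fun_mul hlog)
      refine this.congr_deriv ?_
      field_simp
      norm_num [id]; ring
    have h2' : HasDerivAt (fun s : ℝ => (1:ℝ)-s) (-1) t := by
      simpa using (hasDerivAt_const t (1:ℝ)).fun_sub (hasDerivAt_id t)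
    have h3' : HasDerivAt (fun s : ℝ => s * (Real.log s)^2)
        ((Real.log t)^2 + 2*Real.log t) t := by
      have := (hasDerivAt_id t).fun_mul (hlog.fun_pow 2)
      refine this.congr_deriv ?_
      field_simp
      norm_num [id]; ring
    exact (h1'.fun_mul h2').fun_add h3'
  have hv : HasDerivAt (fun s : ℝ => (1-s)^2) (2*(1-t)*(-1)) t := by
    have h2' : HasDerivAt (fun s : ℝ => (1:ℝ)-s) (-1) t := by
      simpa using (hasDerivAt_const t (1:ℝ)).fun_sub (hasDerivAt_id t)
    have := h2'.fun_pow 2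
    refine this.congr_deriv ?_
    ring
  have hv2 : ((1:ℝ)-t)^2 ≠ 0 := pow_ne_zero _ hne1
  have := hu.fun_div hv hv2
  refine this.congr_deriv ?_
  field_simp
  ring

lemma gE_cont : ContinuousOn gE (Set.Ico (0:ℝ) 1) := by
  intro y hy
  rcases eq_or_lt_of_le hy.1 with h0 | h0
  · -- y = 0
    subst h0
    have h := tendsto_log_mul_rpow_nhdsGT_zero (by norm_num : (0:ℝ) < 1/2)
    have h2 : Filter.Tendsto (fun x : ℝ => (Real.log x * x ^ (1/2:ℝ))^2 * (1-x)⁻¹)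
        (nhdsWithin 0 (Set.Ioi 0)) (nhds 0) := by
      have hc : Filter.Tendsto (fun x : ℝ => (1-x)⁻¹) (nhdsWithin 0 (Set.Ioi 0)) (nhds 1) := by
        have : Filter.Tendsto (fun x : ℝ => (1-x)⁻¹) (nhds 0) (nhds 1) := by
          have : ContinuousAt (fun x : ℝ => (1-x)⁻¹) 0 := by
            apply ContinuousAt.inv₀ (by fun_prop) (by norm_num)
          simpa using this.tendsto
        exact this.mono_left nhdsWithin_le_nhds
      simpa using (h.pow 2).mul hc
    have h3 : Filter.Tendsto gE (nhdsWithin 0 (Set.Ioi 0)) (nhds 0) := by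
      apply h2.congr'
      filter_upwards [self_mem_nhdsWithin] with x hx
      have hx0 : (0:ℝ) < x := hx
      rw [mul_pow, ← Real.sqrt_eq_rpow, Real.sq_sqrt hx0.le, gE, div_eq_mul_inv]
      ring
    have hpure : Filter.Tendsto gE (pure (0:ℝ)) (nhds 0) := by
      have h0 : gE 0 = 0 := by simp [gE]
      simpa [h0] using tendsto_pure_nhds gE 0
    have : Filter.Tendsto gE (nhdsWithin 0 (Set.Ici 0)) (nhds 0) := by
      rw [show Set.Ici (0:ℝ) = insert 0 (Set.Ioi 0) by
            rw [Set.Ioi_insert], nhdsWithin_insert]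
      exact Filter.Tendsto.sup hpure h3
    have hgE0 : gE 0 = 0 := by simp [gE]
    refine ContinuousWithinAt.mono ?_ (Set.Ico_subset_Ici_self)
    unfold ContinuousWithinAt
    rw [hgE0]
    exact this
  · -- 0 < y
    have h1 : y < 1 := hy.2
    apply ContinuousAt.continuousWithinAt
    apply ContinuousAt.div
    · exact (continuousAt_id.mul ((Real.continuousAt_log h0.ne').pow 2))
    · fun_prop
    · intro h; linarith [h]

lemma gE_concave : ConcaveOn ℝ (Set.Ico (0:ℝ) 1) gE := by
  have hint : interior (Set.Ico (0:ℝ) 1) = Set.Ioo 0 1 := interior_Ico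
  apply concaveOn_of_hasDerivWithinAt2_nonpos (convex_Ico 0 1) gE_cont
    (f' := fun s : ℝ => (((Real.log s)^2 + 2*Real.log s) * (1-s) + s * (Real.log s)^2) / (1-s)^2)
    (f'' := fun s : ℝ => 2*(Real.log s - s + 1)*(s*Real.log s - s + 1)/(s*(1-s)^3))
  · intro t ht
    rw [hint] at ht
    exact (gE_deriv1 ht).hasDerivWithinAt
  · intro t ht
    rw [hint] at ht
    exact (gE_deriv2 ht).hasDerivWithinAt
  · intro t ht
    rw [hint] at ht
    obtain ⟨h0, h1⟩ := ht
    have ha : Real.log t - t + 1 ≤ 0 := by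
      have := Real.log_le_sub_one_of_pos h0
      linarith
    have hb : 0 ≤ t * Real.log t - t + 1 := by
      have h := Real.log_le_sub_one_of_pos (show (0:ℝ) < t⁻¹ by positivity)
      rw [Real.log_inv] at h
      have : -Real.log t ≤ t⁻¹ - 1 := h
      have h2 : -t * Real.log t ≤ t * (t⁻¹ - 1) := by
        nlinarith
      rw [mul_sub, mul_inv_cancel₀ h0.ne'] at h2
      nlinarith
    have h1t : (0:ℝ) < 1 - t := by linarith
    have hden : 0 < t * (1-t)^3 := by positivity
    apply div_nonpos_of_nonpos_of_nonneg _ hden.le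
    nlinarith

lemma pair_sum_eq {n : ℕ} (f : Fin n → ℝ) :
    (∑ i, f i)^2 = (∑ i, (f i)^2)
      + 2 * ∑ p ∈ Finset.univ.filter (fun p : Fin n × Fin n => p.1 < p.2), f p.1 * f p.2 := by
  classical
  have h1 : (∑ i, f i)^2 = ∑ p : Fin n × Fin n, f p.1 * f p.2 := by
    rw [sq, Finset.sum_mul_sum, ← Finset.univ_product_univ, Finset.sum_product]
  have h2 : (∑ p : Fin n × Fin n, f p.1 * f p.2)
      = (∑ p ∈ Finset.univ.filter (fun p : Fin n × Fin n => p.1 < p.2), f p.1 * f p.2)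
      + (∑ p ∈ Finset.univ.filter (fun p : Fin n × Fin n => ¬ p.1 < p.2), f p.1 * f p.2) :=
    (Finset.sum_filter_add_sum_filter_not _ _ _).symm
  have h3 : (∑ p ∈ Finset.univ.filter (fun p : Fin n × Fin n => ¬ p.1 < p.2), f p.1 * f p.2)
      = (∑ p ∈ (Finset.univ.filter (fun p : Fin n × Fin n => ¬ p.1 < p.2)).filter
            (fun p : Fin n × Fin n => p.2 < p.1), f p.1 * f p.2)
      + (∑ p ∈ (Finset.univ.filter (fun p : Fin n × Fin n => ¬ p.1 < p.2)).filter
            (fun p : Fin n × Fin n => ¬ p.2 < p.1), f p.1 * f p.2) :=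
    (Finset.sum_filter_add_sum_filter_not _ _ _).symm
  have e1 : (Finset.univ.filter (fun p : Fin n × Fin n => ¬ p.1 < p.2)).filter
      (fun p : Fin n × Fin n => p.2 < p.1)
      = Finset.univ.filter (fun p : Fin n × Fin n => p.2 < p.1) := by
    ext p
    simp only [Finset.mem_filter, Finset.mem_univ, true_and]
    constructor
    · rintro ⟨_, h⟩; exact h
    · intro h; exact ⟨lt_asymm h, h⟩
  have e2 : (Finset.univ.filter (fun p : Fin n × Fin n => ¬ p.1 < p.2)).filter
      (fun p : Fin n × Fin n => ¬ p.2 < p.1)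
      = Finset.univ.filter (fun p : Fin n × Fin n => p.1 = p.2) := by
    ext p
    simp only [Finset.mem_filter, Finset.mem_univ, true_and, not_lt]
    constructor
    · rintro ⟨h, h'⟩; exact le_antisymm h' h
    · intro h; exact ⟨le_of_eq h.symm, le_of_eq h⟩
  have hswap : (∑ p ∈ Finset.univ.filter (fun p : Fin n × Fin n => p.2 < p.1), f p.1 * f p.2)
      = ∑ p ∈ Finset.univ.filter (fun p : Fin n × Fin n => p.1 < p.2), f p.1 * f p.2 := by
    apply Finset.sum_equiv (Equiv.prodComm (Fin n) (Fin n))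
    · intro p
      simp [Finset.mem_filter]
    · intro p _
      exact mul_comm _ _
  have hdiag : (∑ p ∈ Finset.univ.filter (fun p : Fin n × Fin n => p.1 = p.2), f p.1 * f p.2)
      = ∑ i, (f i)^2 := by
    refine Finset.sum_nbij' (i := fun p : Fin n × Fin n => p.1)
      (j := fun a : Fin n => (a, a)) ?_ ?_ ?_ ?_ ?_
    · intro p hp; simp
    · intro a _; simp
    · intro p hp
      simp only [Finset.mem_filter] at hp
      exact Prod.ext rfl hp.2
    · intro a _; rfl
    · intro p hp
      simp only [Finset.mem_filter] at hp
      rw [← hp.2, sq]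
  rw [h1, h2, h3, e1, e2, hswap, hdiag]
  ring

theorem entropy_le_cN_sqrt_e2 (N : ℕ) (hN : 2 ≤ N) (x : Fin N → ℝ)
    (hx : ∀ i, 0 ≤ x i) (hsum : ∑ i, x i = 1) :
    ∑ i, (-x i * Real.log (x i)) ≤
      Real.log N * Real.sqrt (2 * N / (N - 1)) *
        Real.sqrt (∑ p ∈ Finset.univ.filter (fun p : Fin N × Fin N => p.1 < p.2),
          x p.1 * x p.2) := by
  have hN2 : (2:ℝ) ≤ (N:ℝ) := by exact_mod_cast hN
  have hN1 : (0:ℝ) < (N:ℝ) - 1 := by linarith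
  have hN0 : (0:ℝ) < (N:ℝ) := by linarith
  have hlogN : 0 ≤ Real.log N := Real.log_nonneg (by linarith)
  set E := ∑ p ∈ Finset.univ.filter (fun p : Fin N × Fin N => p.1 < p.2), x p.1 * x p.2 with hE
  by_cases hone : ∃ i, x i = 1
  · obtain ⟨i, hi⟩ := hone
    have hz : ∀ j, j ≠ i → x j = 0 := by
      intro j hj
      by_contra h
      have hj0 : 0 < x j := lt_of_le_of_ne (hx j) (Ne.symm h)
      have : x i + x j ≤ ∑ k, x k := by
        rw [← Finset.sum_erase_add Finset.univ x (Finset.mem_univ i)]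
        have : x j ≤ ∑ k ∈ Finset.univ.erase i, x k :=
          Finset.single_le_sum (fun k _ => hx k)
            (Finset.mem_erase.mpr ⟨hj, Finset.mem_univ j⟩)
        linarith
      rw [hsum, hi] at this
      linarith
    have hLHS : ∑ i, (-x i * Real.log (x i)) = 0 := by
      apply Finset.sum_eq_zero
      intro j _
      by_cases hji : j = i
      · rw [hji, hi]; simp
      · rw [hz j hji]; simp
    rw [hLHS]
    exact mul_nonneg (mul_nonneg hlogN (Real.sqrt_nonneg _)) (Real.sqrt_nonneg _)
  push_neg at hone
  have hx1 : ∀ i, x i < 1 := by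
    intro i
    have : x i ≤ ∑ k, x k := Finset.single_le_sum (fun k _ => hx k) (Finset.mem_univ i)
    rw [hsum] at this
    exact lt_of_le_of_ne this (hone i)
  set A := ∑ i, x i * (1 - x i) with hA
  have hAnn : 0 ≤ A := Finset.sum_nonneg fun i _ => mul_nonneg (hx i) (by linarith [hx1 i])
  have hA' : A = 1 - ∑ i, (x i)^2 := by
    have h := Finset.sum_congr rfl (fun i (_ : i ∈ Finset.univ) =>
      (by ring : x i * (1 - x i) = x i - (x i)^2))
    rw [hA, h, Finset.sum_sub_distrib, hsum]
  have hEA : E = A / 2 := by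
    have hps := pair_sum_eq x
    rw [hsum, one_pow] at hps
    rw [← hE] at hps
    linarith
  -- pointwise factorization
  have hgnn : ∀ i, 0 ≤ gE (x i) := by
    intro i
    unfold gE
    apply div_nonneg (mul_nonneg (hx i) (sq_nonneg _)) (by linarith [hx1 i])
  have hstep : ∀ i, -x i * Real.log (x i)
      = Real.sqrt (x i * (1 - x i)) * Real.sqrt (gE (x i)) := by
    intro i
    rcases eq_or_lt_of_le (hx i) with h0 | h0
    · rw [← h0]; simp [gE]
    · rw [← Real.sqrt_mul (mul_nonneg (hx i) (by linarith [hx1 i]))]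
      have key : x i * (1 - x i) * gE (x i) = (x i * Real.log (x i))^2 := by
        unfold gE
        have hne : (1:ℝ) - x i ≠ 0 := by linarith [hx1 i]
        field_simp
      rw [key, Real.sqrt_sq_eq_abs, abs_of_nonpos ?hnp]
      · ring
      case hnp =>
        have : Real.log (x i) ≤ 0 := Real.log_nonpos h0.le (hx1 i).le
        exact mul_nonpos_of_nonneg_of_nonpos (hx i) this
  -- Cauchy-Schwarz
  set B := ∑ i, gE (x i) with hB
  have hBnn : 0 ≤ B := Finset.sum_nonneg fun i _ => hgnn i
  have hS2 : (∑ i, (-x i * Real.log (x i)))^2 ≤ A * B := by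
    calc (∑ i, (-x i * Real.log (x i)))^2
        = (∑ i, Real.sqrt (x i * (1 - x i)) * Real.sqrt (gE (x i)))^2 := by
          rw [Finset.sum_congr rfl (fun i _ => hstep i)]
      _ ≤ (∑ i, Real.sqrt (x i * (1 - x i))^2) * (∑ i, Real.sqrt (gE (x i))^2) :=
          Finset.sum_mul_sq_le_sq_mul_sq _ _ _
      _ = A * B := by
          congr 1
          · exact Finset.sum_congr rfl fun i _ =>
              Real.sq_sqrt (mul_nonneg (hx i) (by linarith [hx1 i]))
          · exact Finset.sum_congr rfl fun i _ => Real.sq_sqrt (hgnn i)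
  -- Jensen
  have hBle : B ≤ Real.log N ^ 2 * N / (N - 1) := by
    have hmem : ∀ i ∈ Finset.univ, x i ∈ Set.Ico (0:ℝ) 1 := fun i _ => ⟨hx i, hx1 i⟩
    have hw : ∑ _i : Fin N, (N:ℝ)⁻¹ = 1 := by
      rw [Finset.sum_const, Finset.card_univ, Fintype.card_fin, nsmul_eq_mul]
      field_simp
    have hj := gE_concave.le_map_sum (w := fun _ : Fin N => (N:ℝ)⁻¹) (p := x)
      (t := Finset.univ) (fun i _ => by positivity) hw hmem
    have hsum' : (∑ i, (N:ℝ)⁻¹ • x i) = (N:ℝ)⁻¹ := by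
      rw [← Finset.smul_sum, hsum, smul_eq_mul, mul_one]
    rw [hsum'] at hj
    have hgN : gE ((N:ℝ)⁻¹) = Real.log N ^ 2 / (N - 1) := by
      unfold gE
      rw [Real.log_inv]
      field_simp
    rw [hgN] at hj
    have hj' : (N:ℝ)⁻¹ * B ≤ Real.log N ^ 2 / (N - 1) := by
      rw [hB, Finset.mul_sum]
      simpa [smul_eq_mul] using hj
    calc B = (N:ℝ) * ((N:ℝ)⁻¹ * B) := by field_simp
      _ ≤ (N:ℝ) * (Real.log N ^ 2 / (N - 1)) := by
          apply mul_le_mul_of_nonneg_left hj' hN0.le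
      _ = Real.log N ^ 2 * N / (N - 1) := by ring
  -- combine
  have hSnn : 0 ≤ ∑ i, (-x i * Real.log (x i)) := by
    apply Finset.sum_nonneg
    intro i _
    have : Real.log (x i) ≤ 0 := Real.log_nonpos (hx i) (hx1 i).le
    nlinarith [hx i]
  have hfin : ∑ i, (-x i * Real.log (x i)) ≤ Real.sqrt A * Real.sqrt B := by
    rw [← Real.sqrt_mul hAnn]
    calc ∑ i, (-x i * Real.log (x i))
        = Real.sqrt ((∑ i, (-x i * Real.log (x i)))^2) := (Real.sqrt_sq hSnn).symm
      _ ≤ Real.sqrt (A * B) := Real.sqrt_le_sqrt hS2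
  calc ∑ i, (-x i * Real.log (x i)) ≤ Real.sqrt A * Real.sqrt B := hfin
    _ ≤ Real.sqrt A * Real.sqrt (Real.log N ^ 2 * N / (N - 1)) :=
        mul_le_mul_of_nonneg_left (Real.sqrt_le_sqrt hBle) (Real.sqrt_nonneg _)
    _ = Real.log N * Real.sqrt (2 * N / (N - 1)) * Real.sqrt E := by
        rw [hEA]
        have e1 : Real.sqrt (Real.log N^2 * N/(N-1)) = Real.log N * Real.sqrt ((N:ℝ)/((N:ℝ)-1)) := by
          rw [show Real.log N^2 * (N:ℝ)/((N:ℝ)-1) = Real.log N^2 * ((N:ℝ)/((N:ℝ)-1)) by ring,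
              Real.sqrt_mul (sq_nonneg _), Real.sqrt_sq hlogN]
        have e2 : Real.sqrt (2*(N:ℝ)/((N:ℝ)-1)) * Real.sqrt (A/2)
            = Real.sqrt ((N:ℝ)/((N:ℝ)-1)) * Real.sqrt A := by
          rw [← Real.sqrt_mul (div_nonneg (by positivity) hN1.le),
              ← Real.sqrt_mul (div_nonneg hN0.le hN1.le)]
          congr 1
          field_simp
        rw [e1, mul_assoc, e2]
        ring
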